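/- For integers m ≥ 1 and n ≥ 2, let Q(m,n) be the graph obtained from the complete graph K_m by identifying each of its m vertices with one vertex of its own disjoint copy of K_n. Then the Mostar index of Q(m,n) equals m·n·(m−1)·(n−1). -/

import Mathlib

open Finset

section MostarDefs

variable {V : Type*}

/-- Number of vertices of `G` strictly closer to `u` than to `v`. -/
noncomputable def closerCount (G : SimpleGraph V) (u v : V) : ℕ :=
  Nat.card {w : V // G.dist w u < G.dist w v}

/-- Contribution `|n_u - n_v|` of an edge, as a symmetric function on `Sym2 V`. -/
noncomputable def mostarTerm (G : SimpleGraph V) : Sym2 V → ℕ :=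
  Sym2.lift ⟨fun u v => ((closerCount G u v : ℤ) - closerCount G v u).natAbs,
    fun u v => by dsimp only; omega⟩

/-- The Mostar index of a finite graph. -/
noncomputable def mostar (G : SimpleGraph V) [Finite V] : ℕ :=
  letI := Fintype.ofFinite V
  letI := Classical.decEq V
  letI := Classical.decRel G.Adj
  ∑ e ∈ G.edgeFinset, mostarTerm G e

/-- Distance from a vertex `w` to an edge, as min over the endpoints. -/
noncomputable def vertexEdgeDist (G : SimpleGraph V) (w : V) : Sym2 V → ℕ :=
  Sym2.lift ⟨fun x y => min (G.dist x w) (G.dist y w), fun _ _ => min_comm _ _⟩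

/-- Number of edges of `G` strictly closer to `u` than to `v`. -/
noncomputable def edgeCloserCount (G : SimpleGraph V) (u v : V) : ℕ :=
  Nat.card {e : Sym2 V // e ∈ G.edgeSet ∧ vertexEdgeDist G u e < vertexEdgeDist G v e}

/-- Contribution `|m_u - m_v|` of an edge, as a symmetric function on `Sym2 V`. -/
noncomputable def emostarTerm (G : SimpleGraph V) : Sym2 V → ℕ :=
  Sym2.lift ⟨fun u v => ((edgeCloserCount G u v : ℤ) - edgeCloserCount G v u).natAbs,
    fun u v => by dsimp only; omega⟩

/-- The edge Mostar index of a finite graph. -/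
noncomputable def emostar (G : SimpleGraph V) [Finite V] : ℕ :=
  letI := Fintype.ofFinite V
  letI := Classical.decEq V
  letI := Classical.decRel G.Adj
  ∑ e ∈ G.edgeFinset, emostarTerm G e

end MostarDefs

/-- `Q(m,n)`: the complete graph `K_m`, each of whose vertices is identified with a
vertex of its own disjoint copy of `K_n`.  Vertex `(i, 0)` is the `i`-th hub vertex. -/
def Qgraph (m n : ℕ) : SimpleGraph (Fin m × Fin n) where
  Adj p q := (p.1 = q.1 ∧ p.2 ≠ q.2) ∨ (p.2.val = 0 ∧ q.2.val = 0 ∧ p.1 ≠ q.1)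
  symm := by
    refine ⟨?_⟩
    rintro p q (⟨h1, h2⟩ | ⟨h1, h2, h3⟩)
    · exact Or.inl ⟨h1.symm, h2.symm⟩
    · exact Or.inr ⟨h2, h1, h3.symm⟩
  loopless := ⟨by rintro p (⟨_, h⟩ | ⟨_, _, h⟩) <;> exact h rfl⟩


section QgraphProof

open SimpleGraph

variable {m n : ℕ}

private def dQ (m n : ℕ) (p q : Fin m × Fin n) : ℕ :=
  if p.1 = q.1 then (if p.2 = q.2 then 0 else 1)
  else (if p.2.val = 0 then 0 else 1) + 1 + (if q.2.val = 0 then 0 else 1)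

private lemma dQ_step {p p' q : Fin m × Fin n} (h : (Qgraph m n).Adj p p') :
    dQ m n p q ≤ dQ m n p' q + 1 := by
  obtain ⟨a, b⟩ := p
  obtain ⟨a', b'⟩ := p'
  obtain ⟨c, d⟩ := q
  obtain (⟨h1, h2⟩ | ⟨h1, h2, h3⟩) := h <;>
  · simp only [dQ] at *
    split_ifs <;> simp_all

private lemma dQ_le_length {p q : Fin m × Fin n} (W : (Qgraph m n).Walk p q) :
    dQ m n p q ≤ W.length := by
  induction W with
  | nil => simp [dQ]
  | cons h W ih =>
      rw [SimpleGraph.Walk.length_cons]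
      exact (dQ_step h).trans (by omega)

private lemma exists_walk_dQ [NeZero n] (p q : Fin m × Fin n) :
    ∃ W : (Qgraph m n).Walk p q, W.length = dQ m n p q := by
  by_cases h1 : p.1 = q.1
  · by_cases h2 : p.2 = q.2
    · have hpq : p = q := Prod.ext h1 h2
      subst hpq
      exact ⟨.nil, by simp [dQ]⟩
    · exact ⟨.cons (Or.inl ⟨h1, h2⟩) .nil, by simp [dQ, h1, h2]; rfl⟩
  · obtain ⟨Wp, hWp⟩ : ∃ W : (Qgraph m n).Walk p (p.1, 0),
        W.length = (if p.2.val = 0 then 0 else 1) := by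
      by_cases hp : p.2.val = 0
      · have hpe : p = (p.1, 0) := Prod.ext rfl (by ext; simpa using hp)
        exact ⟨SimpleGraph.Walk.nil.copy rfl hpe, by simp [hp]⟩
      · have hadj : (Qgraph m n).Adj p (p.1, 0) := by
          refine Or.inl ⟨rfl, fun he => hp ?_⟩
          rw [he]; simp
        exact ⟨.cons hadj .nil, by simp [hp]⟩
    obtain ⟨Wq, hWq⟩ : ∃ W : (Qgraph m n).Walk ((q.1 : Fin m), (0 : Fin n)) q,
        W.length = (if q.2.val = 0 then 0 else 1) := by
      by_cases hq : q.2.val = 0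
      · have hqe : q = (q.1, 0) := Prod.ext rfl (by ext; simpa using hq)
        exact ⟨SimpleGraph.Walk.nil.copy hqe rfl, by simp [hq]⟩
      · have hadj : (Qgraph m n).Adj (q.1, (0 : Fin n)) q := by
          refine Or.inl ⟨rfl, fun he => hq ?_⟩
          rw [← he]; simp
        exact ⟨.cons hadj .nil, by simp [hq]⟩
    have hmid : (Qgraph m n).Adj (p.1, (0 : Fin n)) (q.1, 0) :=
      Or.inr ⟨by simp, by simp, by simpa using h1⟩
    refine ⟨Wp.append (.cons hmid Wq), ?_⟩
    rw [SimpleGraph.Walk.length_append, SimpleGraph.Walk.length_cons, hWp, hWq]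
    simp only [dQ, if_neg h1]
    omega

private lemma dist_Qgraph [NeZero n] (p q : Fin m × Fin n) :
    (Qgraph m n).dist p q = dQ m n p q := by
  obtain ⟨W, hW⟩ := exists_walk_dQ p q
  refine le_antisymm (hW ▸ SimpleGraph.dist_le W) ?_
  by_cases h0 : (Qgraph m n).dist p q = 0
  · rw [h0]
    rcases SimpleGraph.dist_eq_zero_iff_eq_or_not_reachable.mp h0 with h | h
    · subst h; simp [dQ]
    · exact absurd ⟨W⟩ h
  · obtain ⟨W', hW'⟩ := SimpleGraph.exists_walk_of_dist_ne_zero h0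
    exact hW' ▸ dQ_le_length W'

private lemma closerCount_eq_card {V : Type*} [Fintype V] (G : SimpleGraph V) (u v : V)
    (Q : V → Prop) [DecidablePred Q] (h : ∀ w, G.dist w u < G.dist w v ↔ Q w) :
    closerCount G u v = (univ.filter Q).card := by
  rw [closerCount, Nat.card_congr (Equiv.subtypeEquivRight h), Nat.card_eq_fintype_card,
    Fintype.card_subtype]

private lemma card_filter_fst_eq (i : Fin m) :
    (univ.filter fun w : Fin m × Fin n => w.1 = i).card = n := by
  rw [show (univ.filter fun w : Fin m × Fin n => w.1 = i)
      = univ.image (fun j : Fin n => (i, j)) from ?_]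
  · rw [card_image_of_injective _ fun a b h => by simpa [Prod.ext_iff] using h]
    simp
  · ext ⟨a, b⟩
    simp [Prod.ext_iff, eq_comm]

private lemma card_filter_fst_ne (hm : 1 ≤ m) (i : Fin m) :
    (univ.filter fun w : Fin m × Fin n => ¬ w.1 = i).card = m * n - n := by
  have h1 := card_filter_add_card_filter_not
    (s := (univ : Finset (Fin m × Fin n))) (p := fun w => w.1 = i)
  have h2 := card_filter_fst_eq (n := n) i
  have h3 : (univ : Finset (Fin m × Fin n)).card = m * n := by simp
  omega

private lemma card_filter_pred_eq {V : Type*} [Fintype V] [DecidableEq V] (u : V)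
    (Q : V → Prop) [DecidablePred Q] (h : ∀ w, Q w ↔ w = u) :
    (univ.filter Q).card = 1 := by
  rw [show univ.filter Q = {u} from by ext w; simp [h]]
  simp

private lemma cc_hub_big [NeZero n] (hm : 1 ≤ m) (u v : Fin m × Fin n)
    (h1 : u.1 = v.1) (hu : u.2.val = 0) (hv : v.2.val ≠ 0) :
    closerCount (Qgraph m n) u v = (m * n - n) + 1 := by
  rw [closerCount_eq_card _ _ _ (fun w => w = u ∨ ¬ w.1 = u.1) ?_]
  · rw [show univ.filter (fun w : Fin m × Fin n => w = u ∨ ¬ w.1 = u.1)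
        = insert u (univ.filter fun w => ¬ w.1 = u.1) from by ext w; simp]
    rw [card_insert_of_notMem (by simp), card_filter_fst_ne hm]
  · intro w
    rw [dist_Qgraph, dist_Qgraph]
    obtain ⟨a, b⟩ := w
    obtain ⟨i, j0⟩ := u
    obtain ⟨i', j⟩ := v
    simp only at h1 hu hv
    subst h1
    simp only [dQ, Prod.ext_iff]
    split_ifs <;> simp_all <;> omega

private lemma cc_hub_small [NeZero n] (u v : Fin m × Fin n)
    (h1 : u.1 = v.1) (hu : u.2.val = 0) (hv : v.2.val ≠ 0) :
    closerCount (Qgraph m n) v u = 1 := by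
  rw [closerCount_eq_card _ _ _ (fun w => w = v) ?_]
  · exact card_filter_pred_eq v _ fun w => Iff.rfl
  · intro w
    rw [dist_Qgraph, dist_Qgraph]
    obtain ⟨a, b⟩ := w
    obtain ⟨i, j0⟩ := u
    obtain ⟨i', j⟩ := v
    simp only at h1 hu hv
    subst h1
    simp only [dQ, Prod.ext_iff]
    split_ifs <;> simp_all <;> omega

private lemma cc_hubhub [NeZero n] (u v : Fin m × Fin n)
    (hu : u.2.val = 0) (hv : v.2.val = 0) (h1 : u.1 ≠ v.1) :
    closerCount (Qgraph m n) u v = n := by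
  rw [closerCount_eq_card _ _ _ (fun w => w.1 = u.1) ?_]
  · exact card_filter_fst_eq u.1
  · intro w
    rw [dist_Qgraph, dist_Qgraph]
    obtain ⟨a, b⟩ := w
    obtain ⟨i, j0⟩ := u
    obtain ⟨i', j0'⟩ := v
    simp only at hu hv h1 ⊢
    simp only [dQ]
    split_ifs <;> simp_all <;> omega

private lemma cc_same [NeZero n] (u v : Fin m × Fin n)
    (h1 : u.1 = v.1) (hu : u.2.val ≠ 0) (hv : v.2.val ≠ 0) (hne : u.2 ≠ v.2) :
    closerCount (Qgraph m n) u v = 1 := by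
  rw [closerCount_eq_card _ _ _ (fun w => w = u) ?_]
  · exact card_filter_pred_eq u _ fun w => Iff.rfl
  · intro w
    rw [dist_Qgraph, dist_Qgraph]
    obtain ⟨a, b⟩ := w
    obtain ⟨i, j⟩ := u
    obtain ⟨i', j'⟩ := v
    simp only at h1 hu hv hne
    subst h1
    simp only [dQ, Prod.ext_iff]
    split_ifs <;> simp_all <;> omega

private lemma mostarTerm_mk {V : Type*} (G : SimpleGraph V) (u v : V) :
    mostarTerm G s(u, v) = ((closerCount G u v : ℤ) - closerCount G v u).natAbs := rfl

private instance : DecidableRel (Qgraph m n).Adj := fun p q =>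
  inferInstanceAs (Decidable ((p.1 = q.1 ∧ p.2 ≠ q.2) ∨ (p.2.val = 0 ∧ q.2.val = 0 ∧ p.1 ≠ q.1)))

private lemma mostar_eq_sum {V : Type*} [Fintype V] (G : SimpleGraph V) [Fintype G.edgeSet] :
    mostar G = ∑ e ∈ G.edgeFinset, mostarTerm G e := by
  unfold mostar
  refine Finset.sum_congr ?_ fun _ _ => rfl
  ext e
  simp [SimpleGraph.edgeFinset, Set.mem_toFinset]

end QgraphProof

theorem mostar_Qgraph (m n : ℕ) (hm : 1 ≤ m) (hn : 2 ≤ n) :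
    mostar (Qgraph m n) = m * n * (m - 1) * (n - 1) := by
  have : NeZero n := ⟨by omega⟩
  classical
  rw [mostar_eq_sum]
  set G := Qgraph m n with hG
  set T : Finset (Sym2 (Fin m × Fin n)) :=
    (univ.filter fun p : Fin m × Fin n => ¬ p.2.val = 0).image (fun p => s((p.1, 0), p)) with hT
  have hmem : ∀ p : Fin m × Fin n, ¬ p.2.val = 0 → G.Adj (p.1, 0) p := by
    intro p hp
    exact Or.inl ⟨rfl, fun h => hp (by rw [← h]; simp)⟩
  have hTsub : T ⊆ G.edgeFinset := by
    intro e he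
    simp only [hT, mem_image, mem_filter] at he
    obtain ⟨p, ⟨-, hp⟩, rfl⟩ := he
    rw [SimpleGraph.mem_edgeFinset]
    exact hmem p hp
  rw [← Finset.sum_sdiff hTsub]
  have hzero : ∑ e ∈ G.edgeFinset \ T, mostarTerm G e = 0 := by
    refine Finset.sum_eq_zero ?_
    intro e he
    induction e using Sym2.ind with
    | _ u v =>
      rw [mem_sdiff, SimpleGraph.mem_edgeFinset, SimpleGraph.mem_edgeSet] at he
      obtain ⟨hadj, hnT⟩ := he
      rcases hadj with ⟨h1, h2⟩ | ⟨h1, h2, h3⟩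
      · by_cases hu : u.2.val = 0
        · exfalso
          apply hnT
          refine mem_image.mpr ⟨v, mem_filter.mpr ⟨mem_univ _, fun hv => h2 ?_⟩, ?_⟩
          · ext; rw [hu, hv]
          · have huv : u = (v.1, (0 : Fin n)) := Prod.ext h1 (by ext; simpa using hu)
            rw [huv]
        · by_cases hv : v.2.val = 0
          · exfalso
            apply hnT
            refine mem_image.mpr ⟨u, mem_filter.mpr ⟨mem_univ _, hu⟩, ?_⟩
            have hvu : v = (u.1, (0 : Fin n)) := Prod.ext h1.symm (by ext; simpa using hv)
            rw [hvu]
            exact Sym2.eq_swap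
          · have hne : u.2 ≠ v.2 := h2
            rw [mostarTerm_mk, cc_same u v h1 hu hv hne,
              cc_same v u h1.symm hv hu hne.symm]
            simp
      · rw [mostarTerm_mk, cc_hubhub u v h1 h2 h3, cc_hubhub v u h2 h1 h3.symm]
        simp
  rw [hzero, zero_add]
  have hterm : ∀ e ∈ T, mostarTerm G e = m * n - n := by
    intro e he
    simp only [hT, mem_image, mem_filter] at he
    obtain ⟨p, ⟨-, hp⟩, rfl⟩ := he
    rw [mostarTerm_mk, cc_hub_big hm (p.1, 0) p rfl (by simp) hp,
      cc_hub_small (p.1, 0) p rfl (by simp) hp]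
    omega
  rw [Finset.sum_const_nat hterm]
  have hTcard : T.card = m * n - m := by
    rw [hT, card_image_of_injOn ?_]
    · have h1 := card_filter_add_card_filter_not
        (s := (univ : Finset (Fin m × Fin n))) (p := fun w => w.2.val = 0)
      have h2 : (univ.filter fun w : Fin m × Fin n => w.2.val = 0).card = m := by
        rw [show (univ.filter fun w : Fin m × Fin n => w.2.val = 0)
            = univ.image (fun i : Fin m => (i, (0 : Fin n))) from ?_]
        · rw [card_image_of_injective _ fun a b h => by simpa [Prod.ext_iff] using h]
          simp
        · ext ⟨a, b⟩
          constructor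
          · intro h
            simp only [mem_filter] at h
            exact mem_image.mpr ⟨a, mem_univ _, Prod.ext rfl (by ext; simpa using h.2.symm)⟩
          · intro h
            simp only [mem_image] at h
            obtain ⟨i, -, hi⟩ := h
            simp only [mem_filter, mem_univ, true_and]
            simpa using congrArg (fun p : Fin m × Fin n => (p.2 : ℕ)) hi.symm
      have h3 : (univ : Finset (Fin m × Fin n)).card = m * n := by simp
      omega
    · intro p hp q hq h
      simp only [mem_coe, mem_filter] at hp hq
      rcases Sym2.eq_iff.mp h with ⟨-, h⟩ | ⟨h', h''⟩
      · exact h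
      · exfalso
        exact hq.2 (by rw [← h']; simp)
  rw [hTcard]
  obtain ⟨m', rfl⟩ : ∃ k, m = k + 1 := ⟨m - 1, by omega⟩
  obtain ⟨n', rfl⟩ : ∃ k, n = k + 1 := ⟨n - 1, by omega⟩
  have e1 : (m' + 1) * (n' + 1) - (m' + 1) = (m' + 1) * n' := by
    rw [Nat.mul_succ, Nat.add_sub_cancel]
  have e2 : (m' + 1) * (n' + 1) - (n' + 1) = m' * (n' + 1) := by
    rw [Nat.succ_mul, Nat.add_sub_cancel]
  rw [e1, e2]
  simp only [Nat.add_sub_cancel]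
  ring
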